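/- Let λ = 0.60729. Then λ − 1 + 2λ ∫_0^1 α (1 − λα + sin(2πλα)/(2π)) dα > 0. -/

import Mathlib

open scoped Real

lemma aux_nonneg {f f' : ℝ → ℝ} (hd : ∀ y : ℝ, HasDerivAt f (f' y) y)
    (h0 : f 0 = 0) (hf' : ∀ y : ℝ, 0 ≤ y → 0 ≤ f' y) {x : ℝ} (hx : 0 ≤ x) : 0 ≤ f x := by
  have hm : MonotoneOn f (Set.Ici 0) := by
    apply monotoneOn_of_deriv_nonneg (convex_Ici 0)
    · exact fun y _ => ((hd y).differentiableAt).continuousAt.continuousWithinAt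
    · exact fun y _ => ((hd y).differentiableAt).differentiableWithinAt
    · intro y hy
      rw [(hd y).deriv]
      exact hf' y (le_of_lt (by simpa using hy))
  have := hm Set.self_mem_Ici (Set.mem_Ici.2 hx) hx
  rwa [h0] at this

lemma chain0 (x : ℝ) (hx : 0 ≤ x) : 0 ≤ (x) - Real.sin x := by
  refine aux_nonneg (f := fun y => (y) - Real.sin y) (f' := fun y => 1 - Real.cos y) (fun y => ?_) (by norm_num) (fun y _ => by simpa using Real.cos_le_one y) hx
  have h := ((hasDerivAt_id y)).sub (Real.hasDerivAt_sin y)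
  refine h.congr_deriv ?_
  all_goals (push_cast; ring)

lemma chain1 (x : ℝ) (hx : 0 ≤ x) : 0 ≤ Real.cos x - (1 - x ^ 2 / 2) := by
  refine aux_nonneg (f := fun y => Real.cos y - (1 - y ^ 2 / 2)) (f' := fun y => (y) - Real.sin y) (fun y => ?_) (by norm_num) (fun y hy => chain0 y hy) hx
  have h := (Real.hasDerivAt_cos y).sub (((hasDerivAt_const y (1:ℝ)).sub ((hasDerivAt_pow 2 y).div_const 2)))
  refine h.congr_deriv ?_
  all_goals (push_cast; ring)

lemma chain2 (x : ℝ) (hx : 0 ≤ x) : 0 ≤ Real.sin x - (x - x ^ 3 / 6) := by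
  refine aux_nonneg (f := fun y => Real.sin y - (y - y ^ 3 / 6)) (f' := fun y => Real.cos y - (1 - y ^ 2 / 2)) (fun y => ?_) (by norm_num) (fun y hy => chain1 y hy) hx
  have h := (Real.hasDerivAt_sin y).sub (((hasDerivAt_id y).sub ((hasDerivAt_pow 3 y).div_const 6)))
  refine h.congr_deriv ?_
  all_goals (push_cast; ring)

lemma chain3 (x : ℝ) (hx : 0 ≤ x) : 0 ≤ (1 - x ^ 2 / 2 + x ^ 4 / 24) - Real.cos x := by
  refine aux_nonneg (f := fun y => (1 - y ^ 2 / 2 + y ^ 4 / 24) - Real.cos y) (f' := fun y => Real.sin y - (y - y ^ 3 / 6)) (fun y => ?_) (by norm_num) (fun y hy => chain2 y hy) hx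
  have h := ((((hasDerivAt_const y (1:ℝ)).sub ((hasDerivAt_pow 2 y).div_const 2)).add ((hasDerivAt_pow 4 y).div_const 24))).sub (Real.hasDerivAt_cos y)
  refine h.congr_deriv ?_
  all_goals (push_cast; ring)

lemma chain4 (x : ℝ) (hx : 0 ≤ x) : 0 ≤ (x - x ^ 3 / 6 + x ^ 5 / 120) - Real.sin x := by
  refine aux_nonneg (f := fun y => (y - y ^ 3 / 6 + y ^ 5 / 120) - Real.sin y) (f' := fun y => (1 - y ^ 2 / 2 + y ^ 4 / 24) - Real.cos y) (fun y => ?_) (by norm_num) (fun y hy => chain3 y hy) hx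
  have h := ((((hasDerivAt_id y).sub ((hasDerivAt_pow 3 y).div_const 6)).add ((hasDerivAt_pow 5 y).div_const 120))).sub (Real.hasDerivAt_sin y)
  refine h.congr_deriv ?_
  all_goals (push_cast; ring)

lemma chain5 (x : ℝ) (hx : 0 ≤ x) : 0 ≤ Real.cos x - (1 - x ^ 2 / 2 + x ^ 4 / 24 - x ^ 6 / 720) := by
  refine aux_nonneg (f := fun y => Real.cos y - (1 - y ^ 2 / 2 + y ^ 4 / 24 - y ^ 6 / 720)) (f' := fun y => (y - y ^ 3 / 6 + y ^ 5 / 120) - Real.sin y) (fun y => ?_) (by norm_num) (fun y hy => chain4 y hy) hx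
  have h := (Real.hasDerivAt_cos y).sub (((((hasDerivAt_const y (1:ℝ)).sub ((hasDerivAt_pow 2 y).div_const 2)).add ((hasDerivAt_pow 4 y).div_const 24)).sub ((hasDerivAt_pow 6 y).div_const 720)))
  refine h.congr_deriv ?_
  all_goals (push_cast; ring)

lemma chain6 (x : ℝ) (hx : 0 ≤ x) : 0 ≤ Real.sin x - (x - x ^ 3 / 6 + x ^ 5 / 120 - x ^ 7 / 5040) := by
  refine aux_nonneg (f := fun y => Real.sin y - (y - y ^ 3 / 6 + y ^ 5 / 120 - y ^ 7 / 5040)) (f' := fun y => Real.cos y - (1 - y ^ 2 / 2 + y ^ 4 / 24 - y ^ 6 / 720)) (fun y => ?_) (by norm_num) (fun y hy => chain5 y hy) hx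
  have h := (Real.hasDerivAt_sin y).sub (((((hasDerivAt_id y).sub ((hasDerivAt_pow 3 y).div_const 6)).add ((hasDerivAt_pow 5 y).div_const 120)).sub ((hasDerivAt_pow 7 y).div_const 5040)))
  refine h.congr_deriv ?_
  all_goals (push_cast; ring)

lemma chain7 (x : ℝ) (hx : 0 ≤ x) : 0 ≤ (1 - x ^ 2 / 2 + x ^ 4 / 24 - x ^ 6 / 720 + x ^ 8 / 40320) - Real.cos x := by
  refine aux_nonneg (f := fun y => (1 - y ^ 2 / 2 + y ^ 4 / 24 - y ^ 6 / 720 + y ^ 8 / 40320) - Real.cos y) (f' := fun y => Real.sin y - (y - y ^ 3 / 6 + y ^ 5 / 120 - y ^ 7 / 5040)) (fun y => ?_) (by norm_num) (fun y hy => chain6 y hy) hx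
  have h := ((((((hasDerivAt_const y (1:ℝ)).sub ((hasDerivAt_pow 2 y).div_const 2)).add ((hasDerivAt_pow 4 y).div_const 24)).sub ((hasDerivAt_pow 6 y).div_const 720)).add ((hasDerivAt_pow 8 y).div_const 40320))).sub (Real.hasDerivAt_cos y)
  refine h.congr_deriv ?_
  all_goals (push_cast; ring)

lemma chain8 (x : ℝ) (hx : 0 ≤ x) : 0 ≤ (x - x ^ 3 / 6 + x ^ 5 / 120 - x ^ 7 / 5040 + x ^ 9 / 362880) - Real.sin x := by
  refine aux_nonneg (f := fun y => (y - y ^ 3 / 6 + y ^ 5 / 120 - y ^ 7 / 5040 + y ^ 9 / 362880) - Real.sin y) (f' := fun y => (1 - y ^ 2 / 2 + y ^ 4 / 24 - y ^ 6 / 720 + y ^ 8 / 40320) - Real.cos y) (fun y => ?_) (by norm_num) (fun y hy => chain7 y hy) hx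
  have h := ((((((hasDerivAt_id y).sub ((hasDerivAt_pow 3 y).div_const 6)).add ((hasDerivAt_pow 5 y).div_const 120)).sub ((hasDerivAt_pow 7 y).div_const 5040)).add ((hasDerivAt_pow 9 y).div_const 362880))).sub (Real.hasDerivAt_sin y)
  refine h.congr_deriv ?_
  all_goals (push_cast; ring)

lemma chain9 (x : ℝ) (hx : 0 ≤ x) : 0 ≤ Real.cos x - (1 - x ^ 2 / 2 + x ^ 4 / 24 - x ^ 6 / 720 + x ^ 8 / 40320 - x ^ 10 / 3628800) := by
  refine aux_nonneg (f := fun y => Real.cos y - (1 - y ^ 2 / 2 + y ^ 4 / 24 - y ^ 6 / 720 + y ^ 8 / 40320 - y ^ 10 / 3628800)) (f' := fun y => (y - y ^ 3 / 6 + y ^ 5 / 120 - y ^ 7 / 5040 + y ^ 9 / 362880) - Real.sin y) (fun y => ?_) (by norm_num) (fun y hy => chain8 y hy) hx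
  have h := (Real.hasDerivAt_cos y).sub (((((((hasDerivAt_const y (1:ℝ)).sub ((hasDerivAt_pow 2 y).div_const 2)).add ((hasDerivAt_pow 4 y).div_const 24)).sub ((hasDerivAt_pow 6 y).div_const 720)).add ((hasDerivAt_pow 8 y).div_const 40320)).sub ((hasDerivAt_pow 10 y).div_const 3628800)))
  refine h.congr_deriv ?_
  all_goals (push_cast; ring)

lemma chain10 (x : ℝ) (hx : 0 ≤ x) : 0 ≤ Real.sin x - (x - x ^ 3 / 6 + x ^ 5 / 120 - x ^ 7 / 5040 + x ^ 9 / 362880 - x ^ 11 / 39916800) := by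
  refine aux_nonneg (f := fun y => Real.sin y - (y - y ^ 3 / 6 + y ^ 5 / 120 - y ^ 7 / 5040 + y ^ 9 / 362880 - y ^ 11 / 39916800)) (f' := fun y => Real.cos y - (1 - y ^ 2 / 2 + y ^ 4 / 24 - y ^ 6 / 720 + y ^ 8 / 40320 - y ^ 10 / 3628800)) (fun y => ?_) (by norm_num) (fun y hy => chain9 y hy) hx
  have h := (Real.hasDerivAt_sin y).sub (((((((hasDerivAt_id y).sub ((hasDerivAt_pow 3 y).div_const 6)).add ((hasDerivAt_pow 5 y).div_const 120)).sub ((hasDerivAt_pow 7 y).div_const 5040)).add ((hasDerivAt_pow 9 y).div_const 362880)).sub ((hasDerivAt_pow 11 y).div_const 39916800)))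
  refine h.congr_deriv ?_
  all_goals (push_cast; ring)

lemma chain11 (x : ℝ) (hx : 0 ≤ x) : 0 ≤ (1 - x ^ 2 / 2 + x ^ 4 / 24 - x ^ 6 / 720 + x ^ 8 / 40320 - x ^ 10 / 3628800 + x ^ 12 / 479001600) - Real.cos x := by
  refine aux_nonneg (f := fun y => (1 - y ^ 2 / 2 + y ^ 4 / 24 - y ^ 6 / 720 + y ^ 8 / 40320 - y ^ 10 / 3628800 + y ^ 12 / 479001600) - Real.cos y) (f' := fun y => Real.sin y - (y - y ^ 3 / 6 + y ^ 5 / 120 - y ^ 7 / 5040 + y ^ 9 / 362880 - y ^ 11 / 39916800)) (fun y => ?_) (by norm_num) (fun y hy => chain10 y hy) hx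
  have h := ((((((((hasDerivAt_const y (1:ℝ)).sub ((hasDerivAt_pow 2 y).div_const 2)).add ((hasDerivAt_pow 4 y).div_const 24)).sub ((hasDerivAt_pow 6 y).div_const 720)).add ((hasDerivAt_pow 8 y).div_const 40320)).sub ((hasDerivAt_pow 10 y).div_const 3628800)).add ((hasDerivAt_pow 12 y).div_const 479001600))).sub (Real.hasDerivAt_cos y)
  refine h.congr_deriv ?_
  all_goals (push_cast; ring)

lemma chain12 (x : ℝ) (hx : 0 ≤ x) : 0 ≤ (x - x ^ 3 / 6 + x ^ 5 / 120 - x ^ 7 / 5040 + x ^ 9 / 362880 - x ^ 11 / 39916800 + x ^ 13 / 6227020800) - Real.sin x := by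
  refine aux_nonneg (f := fun y => (y - y ^ 3 / 6 + y ^ 5 / 120 - y ^ 7 / 5040 + y ^ 9 / 362880 - y ^ 11 / 39916800 + y ^ 13 / 6227020800) - Real.sin y) (f' := fun y => (1 - y ^ 2 / 2 + y ^ 4 / 24 - y ^ 6 / 720 + y ^ 8 / 40320 - y ^ 10 / 3628800 + y ^ 12 / 479001600) - Real.cos y) (fun y => ?_) (by norm_num) (fun y hy => chain11 y hy) hx
  have h := ((((((((hasDerivAt_id y).sub ((hasDerivAt_pow 3 y).div_const 6)).add ((hasDerivAt_pow 5 y).div_const 120)).sub ((hasDerivAt_pow 7 y).div_const 5040)).add ((hasDerivAt_pow 9 y).div_const 362880)).sub ((hasDerivAt_pow 11 y).div_const 39916800)).add ((hasDerivAt_pow 13 y).div_const 6227020800))).sub (Real.hasDerivAt_sin y)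
  refine h.congr_deriv ?_
  all_goals (push_cast; ring)

lemma chain13 (x : ℝ) (hx : 0 ≤ x) : 0 ≤ Real.cos x - (1 - x ^ 2 / 2 + x ^ 4 / 24 - x ^ 6 / 720 + x ^ 8 / 40320 - x ^ 10 / 3628800 + x ^ 12 / 479001600 - x ^ 14 / 87178291200) := by
  refine aux_nonneg (f := fun y => Real.cos y - (1 - y ^ 2 / 2 + y ^ 4 / 24 - y ^ 6 / 720 + y ^ 8 / 40320 - y ^ 10 / 3628800 + y ^ 12 / 479001600 - y ^ 14 / 87178291200)) (f' := fun y => (y - y ^ 3 / 6 + y ^ 5 / 120 - y ^ 7 / 5040 + y ^ 9 / 362880 - y ^ 11 / 39916800 + y ^ 13 / 6227020800) - Real.sin y) (fun y => ?_) (by norm_num) (fun y hy => chain12 y hy) hx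
  have h := (Real.hasDerivAt_cos y).sub (((((((((hasDerivAt_const y (1:ℝ)).sub ((hasDerivAt_pow 2 y).div_const 2)).add ((hasDerivAt_pow 4 y).div_const 24)).sub ((hasDerivAt_pow 6 y).div_const 720)).add ((hasDerivAt_pow 8 y).div_const 40320)).sub ((hasDerivAt_pow 10 y).div_const 3628800)).add ((hasDerivAt_pow 12 y).div_const 479001600)).sub ((hasDerivAt_pow 14 y).div_const 87178291200)))
  refine h.congr_deriv ?_
  all_goals (push_cast; ring)

lemma chain14 (x : ℝ) (hx : 0 ≤ x) : 0 ≤ Real.sin x - (x - x ^ 3 / 6 + x ^ 5 / 120 - x ^ 7 / 5040 + x ^ 9 / 362880 - x ^ 11 / 39916800 + x ^ 13 / 6227020800 - x ^ 15 / 1307674368000) := by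
  refine aux_nonneg (f := fun y => Real.sin y - (y - y ^ 3 / 6 + y ^ 5 / 120 - y ^ 7 / 5040 + y ^ 9 / 362880 - y ^ 11 / 39916800 + y ^ 13 / 6227020800 - y ^ 15 / 1307674368000)) (f' := fun y => Real.cos y - (1 - y ^ 2 / 2 + y ^ 4 / 24 - y ^ 6 / 720 + y ^ 8 / 40320 - y ^ 10 / 3628800 + y ^ 12 / 479001600 - y ^ 14 / 87178291200)) (fun y => ?_) (by norm_num) (fun y hy => chain13 y hy) hx
  have h := (Real.hasDerivAt_sin y).sub (((((((((hasDerivAt_id y).sub ((hasDerivAt_pow 3 y).div_const 6)).add ((hasDerivAt_pow 5 y).div_const 120)).sub ((hasDerivAt_pow 7 y).div_const 5040)).add ((hasDerivAt_pow 9 y).div_const 362880)).sub ((hasDerivAt_pow 11 y).div_const 39916800)).add ((hasDerivAt_pow 13 y).div_const 6227020800)).sub ((hasDerivAt_pow 15 y).div_const 1307674368000)))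
  refine h.congr_deriv ?_
  all_goals (push_cast; ring)

lemma sin_lb (x : ℝ) (hx : 0 ≤ x) : x - x ^ 3 / 6 + x ^ 5 / 120 - x ^ 7 / 5040 + x ^ 9 / 362880 - x ^ 11 / 39916800 + x ^ 13 / 6227020800 - x ^ 15 / 1307674368000 ≤ Real.sin x := by
  have := chain14 x hx
  linarith


noncomputable def polyI : ℝ → ℝ := fun x =>
  x * (1 - 0.60729 * x + (2 * π * 0.60729 * x - (2 * π * 0.60729 * x) ^ 3 / 6 + (2 * π * 0.60729 * x) ^ 5 / 120 - (2 * π * 0.60729 * x) ^ 7 / 5040 + (2 * π * 0.60729 * x) ^ 9 / 362880 - (2 * π * 0.60729 * x) ^ 11 / 39916800 + (2 * π * 0.60729 * x) ^ 13 / 6227020800 - (2 * π * 0.60729 * x) ^ 15 / 1307674368000) / (2 * π))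

noncomputable def Gaux : ℝ → ℝ := fun y =>
  y ^ 2 / 2 - 0.60729 * y ^ 3 / 3 +
  ((2 * π * 0.60729) ^ 1 * y ^ 3 / 3 - (2 * π * 0.60729) ^ 3 * y ^ 5 / 30 + (2 * π * 0.60729) ^ 5 * y ^ 7 / 840 - (2 * π * 0.60729) ^ 7 * y ^ 9 / 45360 + (2 * π * 0.60729) ^ 9 * y ^ 11 / 3991680 - (2 * π * 0.60729) ^ 11 * y ^ 13 / 518918400 + (2 * π * 0.60729) ^ 13 * y ^ 15 / 93405312000 - (2 * π * 0.60729) ^ 15 * y ^ 17 / 22230464256000) / (2 * π)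

lemma hGderiv (y : ℝ) : HasDerivAt Gaux (polyI y) y := by
  have h := ((((hasDerivAt_pow 2 y).div_const 2).sub (((hasDerivAt_pow 3 y).const_mul (0.60729 : ℝ)).div_const 3)).add (((((((((((hasDerivAt_pow 3 y).const_mul ((2 * π * 0.60729) ^ 1)).div_const 3).sub (((hasDerivAt_pow 5 y).const_mul ((2 * π * 0.60729) ^ 3)).div_const 30)).add (((hasDerivAt_pow 7 y).const_mul ((2 * π * 0.60729) ^ 5)).div_const 840)).sub (((hasDerivAt_pow 9 y).const_mul ((2 * π * 0.60729) ^ 7)).div_const 45360)).add (((hasDerivAt_pow 11 y).const_mul ((2 * π * 0.60729) ^ 9)).div_const 3991680)).sub (((hasDerivAt_pow 13 y).const_mul ((2 * π * 0.60729) ^ 11)).div_const 518918400)).add (((hasDerivAt_pow 15 y).const_mul ((2 * π * 0.60729) ^ 13)).div_const 93405312000)).sub (((hasDerivAt_pow 17 y).const_mul ((2 * π * 0.60729) ^ 15)).div_const 22230464256000)).div_const (2 * π)))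
  unfold Gaux polyI
  refine h.congr_deriv ?_
  push_cast
  ring

lemma polyI_cont : Continuous polyI := by
  unfold polyI
  fun_prop

lemma hFTC : ∫ x in (0:ℝ)..1, polyI x = Gaux 1 - Gaux 0 :=
  intervalIntegral.integral_eq_sub_of_hasDerivAt (fun x _ => hGderiv x)
    (polyI_cont.intervalIntegrable 0 1)

lemma key_pos : 0 < 0.60729 - 1 + 2 * 0.60729 * (Gaux 1 - Gaux 0) := by
  have hπ : (0:ℝ) < π := Real.pi_pos
  have h2π : (0:ℝ) < 2 * π := by positivity
  have hkey2 : 0 < (2 * π) * (0.60729 - 1 + 2 * 0.60729 * (Gaux 1 - Gaux 0)) := by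
    have hexp : (2 * π) * (0.60729 - 1 + 2 * 0.60729 * (Gaux 1 - Gaux 0)) =
        (10729 / 25000 : ℝ) * π ^ 1 - (4533809462982298827 / 62500000000000000000 : ℝ) * π ^ 3 + (16720741170792784054456879707 / 4375000000000000000000000000000 : ℝ) * π ^ 5 - (2283936471847537875299234792613952881 / 21875000000000000000000000000000000000000 : ℝ) * π ^ 7 + (8423183838690894091784409213705520521362911521 / 4812500000000000000000000000000000000000000000000000 : ℝ) * π ^ 9 - (31064798366738315873020205285571773687646702602518711761 / 1564062500000000000000000000000000000000000000000000000000000000 : ℝ) * π ^ 11 + (12729703532098780310307824479706374842967088840445942710127695289 / 78203125000000000000000000000000000000000000000000000000000000000000000000 : ℝ) * π ^ 13 - (46947292266918412526560786912976982741497202030028060256981486796793801449 / 46530859375000000000000000000000000000000000000000000000000000000000000000000000000000 : ℝ) * π ^ 15 := by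
      unfold Gaux
      field_simp
      ring
    rw [hexp]
    have b1 : (3.141592 : ℝ) < π := Real.pi_gt_d6
    have b2 : π < 3.141593 := Real.pi_lt_d6
    have pb1 : (3.141592 : ℝ) ^ 1 < π ^ 1 := pow_lt_pow_left₀ b1 (by norm_num) (by norm_num)
    have pb3 : π ^ 3 < (3.141593 : ℝ) ^ 3 := pow_lt_pow_left₀ b2 (by positivity) (by norm_num)
    have pb5 : (3.141592 : ℝ) ^ 5 < π ^ 5 := pow_lt_pow_left₀ b1 (by norm_num) (by norm_num)
    have pb7 : π ^ 7 < (3.141593 : ℝ) ^ 7 := pow_lt_pow_left₀ b2 (by positivity) (by norm_num)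
    have pb9 : (3.141592 : ℝ) ^ 9 < π ^ 9 := pow_lt_pow_left₀ b1 (by norm_num) (by norm_num)
    have pb11 : π ^ 11 < (3.141593 : ℝ) ^ 11 := pow_lt_pow_left₀ b2 (by positivity) (by norm_num)
    have pb13 : (3.141592 : ℝ) ^ 13 < π ^ 13 := pow_lt_pow_left₀ b1 (by norm_num) (by norm_num)
    have pb15 : π ^ 15 < (3.141593 : ℝ) ^ 15 := pow_lt_pow_left₀ b2 (by positivity) (by norm_num)
    norm_num at pb1 pb3 pb5 pb7 pb9 pb11 pb13 pb15 ⊢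
    linarith [pb1, pb3, pb5, pb7, pb9, pb11, pb13, pb15]
  have := div_pos hkey2 h2π
  rwa [mul_div_cancel_left₀ _ (ne_of_gt h2π)] at this

theorem c_positive_at_point :
    0 < (0.60729 : ℝ) - 1 + 2 * 0.60729 *
      ∫ α in (0:ℝ)..1, α * (1 - 0.60729 * α + Real.sin (2 * π * 0.60729 * α) / (2 * π)) := by
  have h2π : (0:ℝ) < 2 * π := by positivity
  have hint_sin : IntervalIntegrable
      (fun α : ℝ => α * (1 - 0.60729 * α + Real.sin (2 * π * 0.60729 * α) / (2 * π)))
      MeasureTheory.volume 0 1 := by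
    apply Continuous.intervalIntegrable
    fun_prop
  have hmono : ∫ x in (0:ℝ)..1, polyI x ≤
      ∫ α in (0:ℝ)..1, α * (1 - 0.60729 * α + Real.sin (2 * π * 0.60729 * α) / (2 * π)) := by
    apply intervalIntegral.integral_mono_on (by norm_num)
      (polyI_cont.intervalIntegrable 0 1) hint_sin
    intro x hx
    obtain ⟨hx0, hx1⟩ := hx
    have harg : 0 ≤ 2 * π * 0.60729 * x := by positivity
    have hs := sin_lb _ harg
    unfold polyI
    gcongr x * (1 - 0.60729 * x + ?_ / (2 * π))
  have := key_pos
  rw [hFTC] at hmono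
  nlinarith [hmono]
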